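/- For all natural numbers k ≥ 1, (k+1)^{2^{k-1}} ≥ 2^{2^k - 1}. -/

import Mathlib

lemma aux1 (a : ℕ) : ∀ m : ℕ, a ^ (m + 1) + (m + 1) * a ^ m ≤ (a + 1) ^ (m + 1) := by
  intro m
  induction m with
  | zero => simp
  | succ m ih =>
    calc a ^ (m + 2) + (m + 2) * a ^ (m + 1)
        ≤ a ^ (m + 2) + (m + 2) * a ^ (m + 1) + (m + 1) * a ^ m := Nat.le_add_right _ _
      _ = (a + 1) * (a ^ (m + 1) + (m + 1) * a ^ m) := by ring
      _ ≤ (a + 1) * (a + 1) ^ (m + 1) := Nat.mul_le_mul_left _ ih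
      _ = (a + 1) ^ (m + 2) := by ring

lemma aux2 (n : ℕ) : 2 * (n + 1) ^ (n + 1) ≤ (n + 2) ^ (n + 1) := by
  have h := aux1 (n + 1) n
  have e : (n + 1) ^ (n + 1) = (n + 1) * (n + 1) ^ n := pow_succ' (n + 1) n
  calc 2 * (n + 1) ^ (n + 1) = (n + 1) ^ (n + 1) + (n + 1) * (n + 1) ^ n := by
        rw [← e]; ring
    _ ≤ (n + 2) ^ (n + 1) := h

theorem pow_ineq (k : ℕ) (hk : 1 ≤ k) :
    (k + 1) ^ (2 ^ (k - 1)) ≥ 2 ^ (2 ^ k - 1) := by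
  induction k with
  | zero => omega
  | succ k ih =>
    rcases Nat.eq_zero_or_pos k with hk0 | hk0
    · subst hk0; norm_num
    · have ih' := ih hk0
      have h1 : k + 1 ≤ 2 ^ k := by have := Nat.lt_two_pow_self (n := k); omega
      have h2 : (1:ℕ) ≤ 2 ^ k := Nat.one_le_two_pow
      have esplit : 2 ^ k = (k + 1) + (2 ^ k - (k + 1)) := by omega
      have step1 : (k + 2) ^ (2 ^ k) ≥ 2 * (k + 1) ^ (2 ^ k) := by
        calc (k + 2) ^ (2 ^ k) = (k + 2) ^ (k + 1) * (k + 2) ^ (2 ^ k - (k + 1)) := by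
              rw [← pow_add, ← esplit]
          _ ≥ (2 * (k + 1) ^ (k + 1)) * (k + 1) ^ (2 ^ k - (k + 1)) := by
              apply Nat.mul_le_mul (aux2 k)
              exact Nat.pow_le_pow_left (by omega) _
          _ = 2 * (k + 1) ^ (2 ^ k) := by
              rw [mul_assoc, ← pow_add, ← esplit]
      have step2 : (k + 1) ^ (2 ^ k) ≥ (2 ^ (2 ^ k - 1)) ^ 2 := by
        have e2 : (k + 1) ^ (2 ^ k) = ((k + 1) ^ (2 ^ (k - 1))) ^ 2 := by
          rw [← pow_mul]
          congr 1
          rw [← pow_succ]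
          congr 1
          omega
        rw [e2]
        exact Nat.pow_le_pow_left ih' 2
      have efin : 2 * (2 ^ (2 ^ k - 1)) ^ 2 = 2 ^ (2 ^ (k + 1) - 1) := by
        rw [← pow_mul, ← pow_succ']
        congr 1
        have : 2 ^ (k + 1) = 2 * 2 ^ k := by rw [pow_succ]; ring
        omega
      have hkk : (k + 1 + 1 : ℕ) = k + 2 := by ring
      rw [hkk]
      simp only [Nat.add_sub_cancel]
      calc (k + 2) ^ (2 ^ k) ≥ 2 * (k + 1) ^ (2 ^ k) := step1
        _ ≥ 2 * (2 ^ (2 ^ k - 1)) ^ 2 := Nat.mul_le_mul_left 2 step2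
        _ = 2 ^ (2 ^ (k + 1) - 1) := efin
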